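/- Let S_2 = {z ∈ ℂ : 1 ≤ |z| ≤ 2}, T(z) = e^{2πi(|z|−1)} z, and conj(z) = z̄. Then for any integer k, the map T^k ∘ conj is an orientation-reversing continuous involution of S_2 that restricts to conj on the boundary ∂S_2. -/

import Mathlib

open Complex

/-- The `k`-th power `T^k` of the Dehn twist `T z = e^{2πi(|z|-1)} z`. -/
noncomputable def dehnTwistPow (k : ℤ) (z : ℂ) : ℂ :=
  Complex.exp (2 * Real.pi * I * (k : ℂ) * (‖z‖ - 1)) * z

/-- The annulus `S₂ = {z ∈ ℂ : 1 ≤ |z| ≤ 2}`. -/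
def annulusS2 : Set ℂ := {z : ℂ | 1 ≤ ‖z‖ ∧ ‖z‖ ≤ 2}

private lemma det_clm (L : ℂ →L[ℝ] ℂ) :
    LinearMap.det (L : ℂ →ₗ[ℝ] ℂ) = (L 1).re * (L I).im - (L I).re * (L 1).im := by
  rw [← LinearMap.det_toMatrix Complex.basisOneI, Matrix.det_fin_two]
  simp [LinearMap.toMatrix_apply, Complex.coe_basisOneI_repr, Complex.coe_basisOneI]

private lemma hasFDerivAt_cabs {z : ℂ} (hz : z ≠ 0) :
    HasFDerivAt (fun w : ℂ => ‖w‖)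
      ((‖z‖)⁻¹ • (z.re • Complex.reCLM + z.im • Complex.imCLM)) z := by
  have hre : HasFDerivAt (fun w : ℂ => w.re) Complex.reCLM z := Complex.reCLM.hasFDerivAt
  have him : HasFDerivAt (fun w : ℂ => w.im) Complex.imCLM z := Complex.imCLM.hasFDerivAt
  have hsq : HasFDerivAt (fun w : ℂ => w.re * w.re + w.im * w.im)
      ((z.re * 2) • Complex.reCLM + (z.im * 2) • Complex.imCLM) z := by
    have h := (hre.mul hre).add (him.mul him)
    exact h.congr_fderiv (by ext h1 <;> simp <;> ring)
  have hnz : z.re * z.re + z.im * z.im ≠ 0 := by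
    have := Complex.normSq_pos.mpr hz
    rw [Complex.normSq_apply] at this
    linarith
  have hsqrt := (Real.hasDerivAt_sqrt hnz).comp_hasFDerivAt z hsq
  have habs : (fun w : ℂ => ‖w‖) = fun w : ℂ => Real.sqrt (w.re * w.re + w.im * w.im) := by
    funext w; rw [Complex.norm_def, Complex.normSq_apply]
  rw [habs]
  refine hsqrt.congr_fderiv ?_
  have hs : Real.sqrt (z.re * z.re + z.im * z.im) = ‖z‖ := by
    rw [Complex.norm_def, Complex.normSq_apply]
  ext h1 <;> rw [hs] <;> simp <;> field_simp <;> ring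

set_option maxHeartbeats 1000000 in
private lemma det_f (k : ℤ) {z : ℂ} (hz : z ≠ 0) :
    LinearMap.det ((fderiv ℝ (fun z => dehnTwistPow k ((starRingEnd ℂ) z)) z) : ℂ →ₗ[ℝ] ℂ) = -1 := by
  set c : ℂ := 2 * Real.pi * I * (k : ℂ) with hc
  set A : ℂ →L[ℝ] ℝ := (‖z‖)⁻¹ • (z.re • Complex.reCLM + z.im • Complex.imCLM) with hA
  have h1 : HasFDerivAt (fun w : ℂ => ((‖w‖ : ℝ) : ℂ)) (Complex.ofRealCLM.comp A) z :=
    Complex.ofRealCLM.hasFDerivAt.comp z (hasFDerivAt_cabs hz)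
  have h2 : HasFDerivAt (fun w : ℂ => c * ((‖w‖ : ℂ) - 1))
      (c • (Complex.ofRealCLM.comp A)) z := (h1.sub_const 1).const_mul c
  have h3 := (Complex.hasDerivAt_exp (c * ((‖z‖ : ℂ) - 1))).comp_hasFDerivAt z h2
  have h4 : HasFDerivAt (fun w : ℂ => (starRingEnd ℂ) w)
      (Complex.conjCLE : ℂ →L[ℝ] ℂ) z := Complex.conjCLE.hasFDerivAt
  have h5 := h3.mul h4
  have h6 : (fun w : ℂ => dehnTwistPow k ((starRingEnd ℂ) w)) =
      fun w : ℂ => (Complex.exp ∘ fun w : ℂ => c * ((‖w‖ : ℂ) - 1)) w * (starRingEnd ℂ) w := by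
    funext w
    simp [dehnTwistPow, Complex.norm_conj, hc, Function.comp]
  set D := ((Complex.exp ∘ fun w : ℂ => c * (↑(‖w‖) - 1)) z • (Complex.conjCLE : ℂ →L[ℝ] ℂ) +
      (starRingEnd ℂ) z • Complex.exp (c * (↑(‖z‖) - 1)) • c • Complex.ofRealCLM.comp A) with hD
  have hf : HasFDerivAt (fun w : ℂ => dehnTwistPow k ((starRingEnd ℂ) w)) D z := by
    rw [h6]; exact h5
  rw [hf.fderiv, det_clm]
  have hE : Complex.exp (c * ((‖z‖ : ℂ) - 1)) =
      (Real.cos (2 * Real.pi * k * (‖z‖ - 1)) : ℂ) +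
      (Real.sin (2 * Real.pi * k * (‖z‖ - 1)) : ℂ) * I := by
    have h7 : c * ((‖z‖ : ℂ) - 1) =
        ((2 * Real.pi * k * (‖z‖ - 1) : ℝ) : ℂ) * I := by
      rw [hc]; push_cast; ring
    rw [h7, Complex.exp_mul_I, Complex.ofReal_cos, Complex.ofReal_sin]
  have hcγ : c = ((2 * Real.pi * k : ℝ) : ℂ) * I := by rw [hc]; push_cast; ring
  have e1 : D 1 = ((Real.cos (2 * Real.pi * k * (‖z‖ - 1)) : ℂ) +
      (Real.sin (2 * Real.pi * k * (‖z‖ - 1)) : ℂ) * I) *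
      (1 + ((2 * Real.pi * k : ℝ) : ℂ) * I * ((‖z‖ : ℂ))⁻¹ * (z.re : ℂ) * (starRingEnd ℂ) z) := by
    simp only [hD, ContinuousLinearMap.add_apply, ContinuousLinearMap.smul_apply,
      ContinuousLinearMap.comp_apply, Complex.ofRealCLM_apply, ContinuousLinearEquiv.coe_coe,
      Complex.conjCLE_apply, map_one, smul_eq_mul, Function.comp_apply, hA,
      Complex.reCLM_apply, Complex.imCLM_apply, Complex.one_re, Complex.one_im]
    rw [hE, hcγ]
    push_cast
    ring
  have e2 : D I = ((Real.cos (2 * Real.pi * k * (‖z‖ - 1)) : ℂ) +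
      (Real.sin (2 * Real.pi * k * (‖z‖ - 1)) : ℂ) * I) *
      (-I + ((2 * Real.pi * k : ℝ) : ℂ) * I * ((‖z‖ : ℂ))⁻¹ * (z.im : ℂ) * (starRingEnd ℂ) z) := by
    simp only [hD, ContinuousLinearMap.add_apply, ContinuousLinearMap.smul_apply,
      ContinuousLinearMap.comp_apply, Complex.ofRealCLM_apply, ContinuousLinearEquiv.coe_coe,
      Complex.conjCLE_apply, smul_eq_mul, Function.comp_apply, hA, Complex.conj_I,
      Complex.reCLM_apply, Complex.imCLM_apply, Complex.I_re, Complex.I_im]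
    rw [hE, hcγ]
    push_cast
    ring
  rw [e1, e2]
  have hr0 : ‖z‖ ≠ 0 := norm_ne_zero_iff.mpr hz
  have htrig := Real.sin_sq_add_cos_sq (2 * Real.pi * k * (‖z‖ - 1))
  set co := Real.cos (2 * Real.pi * k * (‖z‖ - 1)) with hco
  set si := Real.sin (2 * Real.pi * k * (‖z‖ - 1)) with hsi
  set r := ‖z‖ with hr
  set x := z.re with hx
  set y := z.im with hy
  simp only [Complex.add_re, Complex.add_im, Complex.mul_re, Complex.mul_im, Complex.I_re,
    Complex.I_im, Complex.ofReal_re, Complex.ofReal_im, Complex.one_re, Complex.one_im,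
    Complex.neg_re, Complex.neg_im, Complex.conj_re, Complex.conj_im, Complex.inv_re,
    Complex.inv_im, Complex.normSq_apply]
  field_simp
  nlinarith [htrig, sq_nonneg r, sq_nonneg co, sq_nonneg si]

private lemma arg_eq (k : ℤ) (r : ℝ) :
    2 * Real.pi * I * (k : ℂ) * ((r : ℂ) - 1) = ((2 * Real.pi * k * (r - 1) : ℝ) : ℂ) * I := by
  push_cast; ring

private lemma habs_dtp (k : ℤ) (w : ℂ) : ‖dehnTwistPow k w‖ = ‖w‖ := by
  rw [dehnTwistPow, norm_mul, arg_eq, Complex.norm_exp]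
  simp

/-- For any integer `k`, the map `T^k ∘ conj` is an orientation-reversing continuous
involution of the annulus `S₂` restricting to complex conjugation on the boundary. -/
theorem dehnTwistPow_comp_conj_involution (k : ℤ) :
    Set.MapsTo (fun z => dehnTwistPow k ((starRingEnd ℂ) z)) annulusS2 annulusS2 ∧
    ContinuousOn (fun z => dehnTwistPow k ((starRingEnd ℂ) z)) annulusS2 ∧
    (∀ z ∈ annulusS2,
      dehnTwistPow k ((starRingEnd ℂ) (dehnTwistPow k ((starRingEnd ℂ) z))) = z) ∧
    (∀ z ∈ annulusS2,
      LinearMap.det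
        ((fderiv ℝ (fun z => dehnTwistPow k ((starRingEnd ℂ) z)) z).toLinearMap) < 0) ∧
    (∀ z : ℂ, ‖z‖ = 1 ∨ ‖z‖ = 2 →
      dehnTwistPow k ((starRingEnd ℂ) z) = (starRingEnd ℂ) z) := by
  have habs : ∀ w : ℂ, ‖dehnTwistPow k ((starRingEnd ℂ) w)‖ = ‖w‖ := by
    intro w
    rw [habs_dtp, Complex.norm_conj]
  refine ⟨?_, ?_, ?_, ?_, ?_⟩
  · intro z hz
    exact ⟨by rw [habs]; exact hz.1, by rw [habs]; exact hz.2⟩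
  · apply Continuous.continuousOn
    unfold dehnTwistPow
    apply Continuous.mul
    · apply Complex.continuous_exp.comp
      apply Continuous.mul continuous_const
      exact ((Complex.continuous_ofReal.comp
        (continuous_norm.comp continuous_star)).sub continuous_const)
    · exact continuous_star
  · intro w _
    have e : dehnTwistPow k ((starRingEnd ℂ) w) =
        Complex.exp (2 * Real.pi * I * (k : ℂ) * ((‖w‖ : ℂ) - 1)) * (starRingEnd ℂ) w := by
      rw [dehnTwistPow, Complex.norm_conj]
    rw [dehnTwistPow, Complex.norm_conj, habs w, e, map_mul, ← Complex.exp_conj,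
      Complex.conj_conj, ← mul_assoc, ← Complex.exp_add]
    have h0 : 2 * Real.pi * I * (k : ℂ) * ((‖w‖ : ℂ) - 1) +
        (starRingEnd ℂ) (2 * Real.pi * I * (k : ℂ) * ((‖w‖ : ℂ) - 1)) = 0 := by
      rw [arg_eq, Complex.add_conj]
      simp
    rw [h0, Complex.exp_zero, one_mul]
  · intro z hz
    have hz0 : z ≠ 0 := by
      intro h
      rw [h] at hz
      simp [annulusS2] at hz
      norm_num at hz
    have := det_f k hz0
    rw [this]
    norm_num
  · intro z hz
    rcases hz with h | h
    · rw [dehnTwistPow, Complex.norm_conj, h]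
      norm_num
    · rw [dehnTwistPow, Complex.norm_conj, h]
      have h2 : 2 * Real.pi * I * (k : ℂ) * (((2 : ℝ) : ℂ) - 1) = (k : ℂ) * (2 * Real.pi * I) := by
        push_cast; ring
      rw [h2, Complex.exp_int_mul_two_pi_mul_I, one_mul]
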